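/- Let 0 < σ < n/2, λ > 0, and suppose λ < |ξ| ≤ 10λ, |z| > λ, and |ξ − z| ≥ (|ξ| − λ)/3. Then there is a constant C = C(n, σ) > 0 such that G(λ; ξ, z) ≥ C·(|ξ| − λ)(|z|² − λ²) / (λ·|ξ − z|^{n−2σ+2}). -/

import Mathlib

set_option maxHeartbeats 1000000
open Real

lemma key_ineq {A B p : ℝ} (hA : 0 < A) (hAB : A ≤ B) (hp : 0 < p) :
    p * B ^ (-p - 1) * (B - A) ≤ A ^ (-p) - B ^ (-p) := by
  have hB : 0 < B := hA.trans_le hAB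
  set r := A / B with hr
  have hr0 : 0 < r := div_pos hA hB
  have hlog : Real.log r ≤ r - 1 := Real.log_le_sub_one_of_pos hr0
  have h1 : 1 + p * (1 - r) ≤ r ^ (-p) := by
    rw [Real.rpow_def_of_pos hr0]
    have h2 : Real.log r * -p + 1 ≤ Real.exp (Real.log r * -p) := Real.add_one_le_exp _
    nlinarith [h2, hlog, hp.le]
  have hArB : A = r * B := by rw [hr, div_mul_cancel₀ A hB.ne']
  have hmul : A ^ (-p) = r ^ (-p) * B ^ (-p) := by
    rw [hArB, Real.mul_rpow hr0.le hB.le]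
  have hBpos : (0:ℝ) < B ^ (-p) := Real.rpow_pos_of_pos hB _
  have hsplit : B ^ (-p - 1) = B ^ (-p) / B := by
    rw [Real.rpow_sub hB, Real.rpow_one]
  have hrB : (1 - r) = (B - A) / B := by rw [hr, sub_div, div_self hB.ne']
  have heq : p * B ^ (-p - 1) * (B - A) = (p * (1 - r)) * B ^ (-p) := by
    rw [hsplit, hrB]; field_simp
  rw [heq, hmul]
  nlinarith [mul_le_mul_of_nonneg_right h1 hBpos.le]

theorem stmt_7 (n : ℕ) (σ : ℝ) (hσ : 0 < σ) (hn : 2 * σ < n) :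
    ∃ C : ℝ, 0 < C ∧ ∀ (lam : ℝ) (ξ z : EuclideanSpace ℝ (Fin n)),
      0 < lam → lam < ‖ξ‖ → ‖ξ‖ ≤ 10 * lam → lam < ‖z‖ →
      (‖ξ‖ - lam) / 3 ≤ ‖ξ - z‖ →
      C * ((‖ξ‖ - lam) * (‖z‖ ^ 2 - lam ^ 2)) / (lam * ‖ξ - z‖ ^ ((n : ℝ) - 2 * σ + 2))
        ≤ ‖ξ - z‖ ^ (2 * σ - (n : ℝ))
          - (lam / ‖ξ‖) ^ ((n : ℝ) - 2 * σ) * ‖(lam ^ 2 / ‖ξ‖ ^ 2) • ξ - z‖ ^ (2 * σ - (n : ℝ)) := by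
  set s : ℝ := (n : ℝ) - 2 * σ with hs_def
  have hs : 0 < s := by rw [hs_def]; linarith
  refine ⟨s / 2 * (43 : ℝ) ^ (-(s + 2)), by positivity, ?_⟩
  intro lam ξ z hlam hlξ hξ10 hlz hdist
  have hξpos : (0:ℝ) < ‖ξ‖ := hlam.trans hlξ
  set a : ℝ := ‖ξ - z‖ with ha_def
  have ha : 0 < a := lt_of_lt_of_le (by linarith) hdist
  set w : EuclideanSpace ℝ (Fin n) := (lam / ‖ξ‖) • ξ - (‖ξ‖ / lam) • z with hw_def
  set b : ℝ := ‖w‖ with hb_def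
  have hb0 : 0 ≤ b := norm_nonneg _
  -- Step A : rewrite second term
  have hwscale : w = (‖ξ‖ / lam) • ((lam ^ 2 / ‖ξ‖ ^ 2) • ξ - z) := by
    rw [hw_def, smul_sub, smul_smul]
    congr 2
    field_simp
  have hbeq : b = (‖ξ‖ / lam) * ‖(lam ^ 2 / ‖ξ‖ ^ 2) • ξ - z‖ := by
    rw [hb_def, hwscale, norm_smul, Real.norm_eq_abs, abs_of_pos (by positivity)]
  have hstepA : (lam / ‖ξ‖) ^ s * ‖(lam ^ 2 / ‖ξ‖ ^ 2) • ξ - z‖ ^ (-s) = b ^ (-s) := by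
    rw [hbeq, Real.mul_rpow (by positivity) (norm_nonneg _),
      show (‖ξ‖ / lam) ^ (-s) = (lam / ‖ξ‖) ^ s by
        rw [show lam / ‖ξ‖ = (‖ξ‖ / lam)⁻¹ by field_simp,
          Real.inv_rpow (by positivity), ← Real.rpow_neg (by positivity)]]
  -- Step B : b² - a² identity
  have hB2 : b ^ 2 - a ^ 2 = (‖ξ‖ ^ 2 - lam ^ 2) * (‖z‖ ^ 2 - lam ^ 2) / lam ^ 2 := by
    have e1 : a ^ 2 = ‖ξ‖ ^ 2 - 2 * inner ℝ ξ z + ‖z‖ ^ 2 :=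
      @norm_sub_sq_real (EuclideanSpace ℝ (Fin n)) _ _ ξ z
    have e2 : b ^ 2 = ‖(lam / ‖ξ‖) • ξ‖ ^ 2
        - 2 * inner ℝ ((lam / ‖ξ‖) • ξ) ((‖ξ‖ / lam) • z) + ‖(‖ξ‖ / lam) • z‖ ^ 2 :=
      @norm_sub_sq_real (EuclideanSpace ℝ (Fin n)) _ _ _ _
    rw [real_inner_smul_left, real_inner_smul_right, norm_smul, norm_smul,
      Real.norm_eq_abs, Real.norm_eq_abs, abs_of_pos (by positivity),
      abs_of_pos (by positivity)] at e2
    rw [e1, e2]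
    field_simp
    ring
  have hbgta : a ^ 2 ≤ b ^ 2 := by
    have : 0 ≤ (‖ξ‖ ^ 2 - lam ^ 2) * (‖z‖ ^ 2 - lam ^ 2) / lam ^ 2 := by
      have h1 : 0 ≤ ‖ξ‖ ^ 2 - lam ^ 2 := by nlinarith
      have h2 : 0 ≤ ‖z‖ ^ 2 - lam ^ 2 := by nlinarith
      positivity
    linarith [hB2 ▸ this]
  -- Step C : b ≤ 43 a
  have hC : b ≤ 43 * a := by
    have hdecomp : w = (‖ξ‖ / lam) • (ξ - z) + (lam / ‖ξ‖ - ‖ξ‖ / lam) • ξ := by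
      rw [hw_def, smul_sub, sub_smul]
      abel
    have htri : b ≤ (‖ξ‖ / lam) * a + (‖ξ‖ / lam - lam / ‖ξ‖) * ‖ξ‖ := by
      calc b ≤ ‖(‖ξ‖ / lam) • (ξ - z)‖ + ‖(lam / ‖ξ‖ - ‖ξ‖ / lam) • ξ‖ := by
              rw [hb_def, hdecomp]; exact norm_add_le _ _
        _ = (‖ξ‖ / lam) * a + |lam / ‖ξ‖ - ‖ξ‖ / lam| * ‖ξ‖ := by
              rw [norm_smul, norm_smul, Real.norm_eq_abs, Real.norm_eq_abs,
                abs_of_pos (by positivity), ha_def]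
        _ = (‖ξ‖ / lam) * a + (‖ξ‖ / lam - lam / ‖ξ‖) * ‖ξ‖ := by
              rw [abs_of_nonpos (by
                have : lam ^ 2 ≤ ‖ξ‖ ^ 2 := by nlinarith
                rw [sub_nonpos, div_le_div_iff₀ hξpos hlam]
                nlinarith)]
              ring
    have hkey : (‖ξ‖ / lam - lam / ‖ξ‖) * ‖ξ‖ = (‖ξ‖ ^ 2 - lam ^ 2) / lam := by
      field_simp
    rw [hkey] at htri
    have h1 : ‖ξ‖ / lam ≤ 10 := by rw [div_le_iff₀ hlam]; linarith
    have h2 : (‖ξ‖ ^ 2 - lam ^ 2) / lam ≤ 33 * a := by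
      rw [div_le_iff₀ hlam]
      nlinarith [hdist, ha.le]
    have h3 : (‖ξ‖ / lam) * a ≤ 10 * a := by nlinarith [ha.le]
    linarith
  -- Step D : key inequality with A = a², B = b², p = s/2
  have ha2 : (0:ℝ) < a ^ 2 := by positivity
  have hkey := key_ineq ha2 hbgta (by linarith : (0:ℝ) < s / 2)
  have hbpos : 0 < b := by nlinarith
  -- rewrite rpow of squares
  have hsq : ∀ x : ℝ, 0 < x → ∀ q : ℝ, (x ^ 2) ^ q = x ^ (2 * q) := by
    intro x hx q
    rw [← Real.rpow_natCast x 2, ← Real.rpow_mul hx.le]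
    norm_num
  rw [hsq a ha, hsq b hbpos, hsq b hbpos] at hkey
  have e3 : 2 * (-(s/2)) = -s := by ring
  have e4 : 2 * (-(s/2) - 1) = -(s + 2) := by ring
  rw [e3, e4] at hkey
  -- hkey : s/2 * b ^ (-(s+2)) * (b^2 - a^2) ≤ a ^ (-s) - b ^ (-s)
  have hbnd : (43:ℝ) ^ (-(s+2)) * a ^ (-(s+2)) ≤ b ^ (-(s+2)) := by
    have h43 : b ≤ 43 * a := hC
    have := Real.rpow_le_rpow_of_nonpos hbpos h43 (by linarith : -(s+2) ≤ 0)
    rwa [Real.mul_rpow (by norm_num) ha.le] at this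
  -- final assembly
  have hgoal2 : 2 * σ - (n:ℝ) = -s := by rw [hs_def]; ring
  rw [hgoal2, hstepA]
  have hgoalexp : (n:ℝ) - 2 * σ + 2 = s + 2 := by rw [hs_def]
  rw [hgoalexp]
  have hfac : 0 ≤ (‖ξ‖ ^ 2 - lam ^ 2) * (‖z‖ ^ 2 - lam ^ 2) / lam ^ 2 := by linarith
  have hchain : s / 2 * ((43:ℝ) ^ (-(s+2)) * a ^ (-(s+2))) * (b ^ 2 - a ^ 2)
      ≤ a ^ (-s) - b ^ (-s) := by
    refine le_trans ?_ hkey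
    apply mul_le_mul_of_nonneg_right _ (by linarith)
    exact mul_le_mul_of_nonneg_left hbnd (by linarith)
  refine le_trans ?_ hchain
  rw [hB2]
  have hainv : a ^ (-(s+2)) = (a ^ (s+2))⁻¹ := Real.rpow_neg ha.le _
  rw [hainv]
  have hapow : 0 < a ^ (s+2) := Real.rpow_pos_of_pos ha _
  rw [div_le_iff₀ (by positivity : (0:ℝ) < lam * a ^ (s+2))]
  have key : s / 2 * 43 ^ (-(s + 2)) * ((‖ξ‖ - lam) * (‖z‖ ^ 2 - lam ^ 2)) * lam
      ≤ s / 2 * (43 ^ (-(s + 2))) * ((‖ξ‖ ^ 2 - lam ^ 2) * (‖z‖ ^ 2 - lam ^ 2)) := by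
    have c43 : (0:ℝ) < (43:ℝ) ^ (-(s+2)) := Real.rpow_pos_of_pos (by norm_num) _
    have h1 : 0 ≤ ‖z‖ ^ 2 - lam ^ 2 := by nlinarith
    have h2 : (‖ξ‖ - lam) * lam ≤ ‖ξ‖ ^ 2 - lam ^ 2 := by nlinarith
    have h3 : 0 ≤ s / 2 * 43 ^ (-(s + 2)) := by positivity
    nlinarith [mul_le_mul_of_nonneg_right (mul_le_mul_of_nonneg_right h2 h1) h3]
  calc s / 2 * 43 ^ (-(s + 2)) * ((‖ξ‖ - lam) * (‖z‖ ^ 2 - lam ^ 2))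
      = (s / 2 * 43 ^ (-(s + 2)) * ((‖ξ‖ - lam) * (‖z‖ ^ 2 - lam ^ 2)) * lam) / lam := by
        field_simp
    _ ≤ (s / 2 * (43 ^ (-(s + 2))) * ((‖ξ‖ ^ 2 - lam ^ 2) * (‖z‖ ^ 2 - lam ^ 2))) / lam := by
        gcongr
    _ = s / 2 * (43 ^ (-(s + 2)) * (a ^ (s + 2))⁻¹) *
          ((‖ξ‖ ^ 2 - lam ^ 2) * (‖z‖ ^ 2 - lam ^ 2) / lam ^ 2) * (lam * a ^ (s + 2)) := by
        field_simp
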